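/- arXiv:1706.01538 — 4 statements merged into one kernel-verified Lean document; each statement's English description precedes it below -/
import Mathlib

section
/- For all complex z, E_{1/2,1}(z) = e^{z²} · erfc(−z), where erfc is the complementary error function. -/
open scoped Real

/-- The two-parameter Mittag-Leffler function `E_{α,β}(z) = ∑ z^k / Γ(αk+β)`. -/
noncomputable def mittagLeffler (α : ℝ) (β : ℂ) (z : ℂ) : ℂ :=
  ∑' k : ℕ, z ^ k * (Complex.Gamma ((α : ℂ) * k + β))⁻¹

/-- The complementary error function `erfc(z) = 1 - erf(z)`, extended to an entire
function of `z ∈ ℂ` via the power series of the error function: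
`erf(z) = (2/√π) ∑ (-1)^n z^(2n+1) / (n! (2n+1))`. -/
noncomputable def erfc (z : ℂ) : ℂ :=
  1 - (2 / (Real.sqrt π : ℂ)) *
    ∑' n : ℕ, (-1) ^ n * z ^ (2 * n + 1) / ((n.factorial : ℂ) * (2 * n + 1))

namespace MLAux

open Finset

-- step 1: the binomial/partial-fraction identity
lemma aux_sum (k : ℕ) : ∀ a : ℂ, (∀ j : ℕ, a + j ≠ 0) →
    ∑ n ∈ range (k+1), ((-1:ℂ))^n * (k.choose n) / (a + n) =
      (k.factorial : ℂ) / ∏ j ∈ range (k+1), (a + j) := by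
  induction k with
  | zero => intro a ha; simpa using (ha 0)
  | succ k ih =>
    intro a ha
    have ha1 : ∀ j : ℕ, (a+1) + j ≠ 0 := by
      intro j
      have := ha (j+1)
      push_cast at this ⊢
      intro h; apply this; linear_combination h
    have h0 : a ≠ 0 := by simpa using ha 0
    have hP : ∀ (b : ℂ), (∀ j : ℕ, b + j ≠ 0) → ∀ m : ℕ, (∏ j ∈ range (m+1), (b + j)) ≠ 0 := by
      intro b hb m
      exact Finset.prod_ne_zero_iff.2 fun j _ => hb j
    have split : ∀ i ∈ range (k+1), ((-1:ℂ))^(i+1) * (((k+1).choose (i+1) : ℕ) : ℂ) / (a + ((i+1:ℕ):ℂ)) =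
        (-(((-1:ℂ))^i * (k.choose i) / ((a+1) + i))) + ((-1:ℂ))^(i+1) * (k.choose (i+1)) / (a + ((i+1:ℕ):ℂ)) := by
      intro i _
      rw [Nat.choose_succ_succ]
      have hd : a + ((i+1:ℕ):ℂ) ≠ 0 := ha (i+1)
      have hd2 : (a+1) + (i:ℂ) ≠ 0 := by
        intro h; apply hd; push_cast; linear_combination h
      push_cast
      rw [show a+1+(i:ℂ) = a + ((i:ℂ)+1) by ring]
      ring
    rw [Finset.sum_range_succ']
    rw [Finset.sum_congr rfl split, Finset.sum_add_distrib]
    have e1 : ∑ i ∈ range (k+1), (-(((-1:ℂ))^i * (k.choose i) / ((a+1) + i)))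
        = -((k.factorial : ℂ) / ∏ j ∈ range (k+1), ((a+1) + j)) := by
      rw [Finset.sum_neg_distrib, ih (a+1) ha1]
    have e2 : (∑ i ∈ range (k+1), ((-1:ℂ))^(i+1) * (k.choose (i+1)) / (a + ((i+1:ℕ):ℂ)))
          + ((-1:ℂ))^0 * (((k+1).choose 0 : ℕ) : ℂ) / (a + ((0:ℕ):ℂ))
        = (k.factorial : ℂ) / ∏ j ∈ range (k+1), (a + j) := by
      rw [← ih a ha, Finset.sum_range_succ, Finset.sum_range_succ' (fun n => ((-1:ℂ))^n * (k.choose n) / (a + n)) k]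
      simp [Nat.choose_succ_self]
    rw [e1, add_assoc, e2]
    -- now the algebra
    have hprod1 : ∏ j ∈ range (k+1+1), (a + (j:ℂ)) = (∏ j ∈ range (k+1), (a + j)) * (a + ((k:ℂ)+1)) := by
      rw [Finset.prod_range_succ]; congr 1; push_cast; ring
    have hprod2 : ∏ j ∈ range (k+1+1), (a + (j:ℂ)) = (∏ j ∈ range (k+1), ((a+1) + j)) * a := by
      rw [Finset.prod_range_succ']
      congr 1
      · exact Finset.prod_congr rfl fun j _ => by push_cast; ring
      · simp
    have hPa := hP a ha k
    have hPa1 := hP (a+1) ha1 k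
    have hk1 : a + ((k:ℂ)+1) ≠ 0 := by have := ha (k+1); push_cast at this; exact this
    have key : (∏ j ∈ range (k+1), (a + (j:ℂ))) * (a + ((k:ℂ)+1))
        = (∏ j ∈ range (k+1), ((a+1) + (j:ℂ))) * a := by
      rw [← hprod1]; exact hprod2
    rw [hprod1]
    have c1 : ((k.factorial:ℂ))/(∏ j ∈ range (k+1), (a + (j:ℂ)))
        = ((k.factorial:ℂ)*(a+((k:ℂ)+1)))/((∏ j ∈ range (k+1), (a + (j:ℂ))) * (a+((k:ℂ)+1))) :=
      (mul_div_mul_right _ _ hk1).symm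
    have c2 : ((k.factorial:ℂ))/(∏ j ∈ range (k+1), ((a+1) + (j:ℂ)))
        = ((k.factorial:ℂ)*a)/((∏ j ∈ range (k+1), (a + (j:ℂ))) * (a+((k:ℂ)+1))) := by
      rw [key]; exact (mul_div_mul_right _ _ h0).symm
    rw [neg_add_eq_sub, c1, c2, div_sub_div_same]
    congr 1
    push_cast [Nat.factorial_succ]
    ring

open scoped Real

lemma aux_gamma (n : ℕ) : Complex.Gamma ((n:ℂ) + 3/2)
    = (Real.sqrt π : ℂ) * ∏ j ∈ range (n+1), ((1:ℂ)/2 + j) := by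
  have hsqrt : ((Real.sqrt π : ℝ) : ℂ) = Complex.Gamma (1/2) := by
    rw [Complex.Gamma_one_half_eq, show ((1:ℂ)/2) = (((1:ℝ)/2 : ℝ):ℂ) by norm_num,
      ← Complex.ofReal_cpow Real.pi_pos.le]
    norm_cast
    rw [Real.sqrt_eq_rpow]
  induction n with
  | zero =>
    have : ((0:ℕ):ℂ) + 3/2 = (1/2 : ℂ) + 1 := by norm_num
    rw [this, Complex.Gamma_add_one _ (by norm_num)]
    rw [← hsqrt]
    simp
    ring
  | succ n ih =>
    have hne : (n:ℂ) + 3/2 ≠ 0 := by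
      have h1 : ((n:ℂ)+3/2) = (((n:ℝ)+3/2 : ℝ):ℂ) := by push_cast; ring
      rw [h1]
      exact Complex.ofReal_ne_zero.2 (by positivity)
    have h2 : ((n+1:ℕ):ℂ) + 3/2 = ((n:ℂ) + 3/2) + 1 := by push_cast; ring
    rw [h2, Complex.Gamma_add_one _ hne,
      Finset.prod_range_succ (fun j => (1:ℂ)/2 + (j:ℂ)) (n+1), ih]
    push_cast
    ring

section main
variable (z : ℂ)

noncomputable def gg (z : ℂ) : ℕ → ℂ := fun m => (z^2)^m / (m.factorial : ℂ)
noncomputable def hh (z : ℂ) : ℕ → ℂ := fun n =>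
  (2 / (Real.sqrt π : ℂ)) * ((-1)^n * z^(2*n+1) / ((n.factorial : ℂ) * (2*n+1)))

lemma hg_norm : Summable fun m => ‖gg z m‖ := by
  refine (Real.summable_pow_div_factorial ‖z^2‖).congr fun m => ?_
  simp [gg, norm_div, norm_pow, Complex.norm_natCast]

lemma hh_norm : Summable fun n => ‖hh z n‖ := by
  refine Summable.of_nonneg_of_le (fun n => norm_nonneg _)
    (fun n => ?_) (((Real.summable_pow_div_factorial (‖z‖^2)).mul_left
      (‖(2 / (Real.sqrt π : ℂ))‖ * ‖z‖)))
  have h1 : ‖hh z n‖ = ‖(2 / (Real.sqrt π : ℂ))‖ *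
      (‖z‖^(2*n+1) / ((n.factorial : ℝ) * (2*n+1))) := by
    show ‖(2 / (Real.sqrt π : ℂ)) * ((-1)^n * z^(2*n+1) / ((n.factorial : ℂ) * (2*n+1)))‖ = _
    rw [show ((n.factorial:ℂ) * (2*(n:ℂ)+1)) = (((n.factorial * (2*n+1) : ℕ)):ℂ) by push_cast; ring]
    simp only [norm_mul, norm_div, norm_pow, norm_neg, norm_one, one_pow, one_mul,
      Complex.norm_natCast]
    push_cast
    ring
  rw [h1]
  rw [mul_assoc]
  refine mul_le_mul_of_nonneg_left ?_ (norm_nonneg _)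
  have h3 : ‖z‖^(2*n+1) / ((n.factorial : ℝ) * (2*n+1)) ≤ ‖z‖^(2*n+1) / (n.factorial : ℝ) := by
    apply div_le_div_of_nonneg_left ?_ ?_ ?_
    · positivity
    · positivity
    · have hf : (0:ℝ) < n.factorial := by exact_mod_cast n.factorial_pos
      nlinarith
  refine h3.trans (le_of_eq ?_)
  rw [pow_add, pow_mul, pow_one]
  ring

lemma key_coeff (z : ℂ) (k : ℕ) :
    ∑ kl ∈ Finset.HasAntidiagonal.antidiagonal k, gg z kl.1 * hh z kl.2
      = z^(2*k+1) * (Complex.Gamma ((k:ℂ) + 3/2))⁻¹ := by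
  have hs : ((Real.sqrt π : ℝ):ℂ) ≠ 0 := by
    exact_mod_cast Complex.ofReal_ne_zero.2 (Real.sqrt_ne_zero'.2 Real.pi_pos)
  have h12 : ∀ j : ℕ, (1:ℂ)/2 + j ≠ 0 := by
    intro j
    have h1 : ((1:ℂ)/2 + j) = (((1:ℝ)/2 + j : ℝ):ℂ) := by push_cast; ring
    rw [h1]
    exact Complex.ofReal_ne_zero.2 (by positivity)
  have hPne : (∏ j ∈ range (k+1), ((1:ℂ)/2 + j)) ≠ 0 :=
    Finset.prod_ne_zero_iff.2 fun j _ => h12 j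
  rw [Finset.Nat.sum_antidiagonal_eq_sum_range_succ (fun i j => gg z i * hh z j)]
  rw [← Finset.sum_range_reflect]
  have hterm : ∀ j ∈ range (k+1),
      gg z (k + 1 - 1 - j) * hh z (k - (k + 1 - 1 - j))
        = (z^(2*k+1) * (2/(Real.sqrt π:ℂ)) * (1/(2*(k.factorial:ℂ))))
            * ((-1:ℂ)^j * ((k.choose j : ℕ):ℂ)/((1:ℂ)/2 + j)) := by
    intro j hj
    have hjk : j ≤ k := by simpa [Nat.lt_succ_iff] using hj
    have e1 : k + 1 - 1 - j = k - j := by omega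
    have e2 : k - (k - j) = j := Nat.sub_sub_self hjk
    rw [e1, e2]
    show (z^2)^(k-j) / ((k-j).factorial : ℂ)
        * ((2 / (Real.sqrt π : ℂ)) * ((-1)^j * z^(2*j+1) / ((j.factorial : ℂ) * (2*j+1)))) = _
    have hz : (z^2)^(k-j) * z^(2*j+1) = z^(2*k+1) := by
      rw [← pow_mul, ← pow_add]; congr 1; omega
    have hcast : ((k.choose j : ℕ):ℂ) = (k.factorial : ℂ) /
        ((j.factorial : ℂ) * ((k-j).factorial : ℂ)) := by
      rw [Nat.cast_choose ℂ hjk]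
    rw [hcast, ← hz]
    have hfj : ((j.factorial : ℂ)) ≠ 0 := by exact_mod_cast j.factorial_ne_zero
    have hfkj : (((k-j).factorial : ℂ)) ≠ 0 := by exact_mod_cast (k-j).factorial_ne_zero
    have hfk : ((k.factorial : ℂ)) ≠ 0 := by exact_mod_cast k.factorial_ne_zero
    have h2j : ((2*(j:ℂ)+1)) ≠ 0 := by
      have h1 : (2*(j:ℂ)+1) = ((2*j+1 : ℝ):ℂ) := by push_cast; ring
      rw [h1]; exact Complex.ofReal_ne_zero.2 (by positivity)
    have hhalf : (1:ℂ)/2 + j = (2*(j:ℂ)+1)/2 := by ring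
    rw [hhalf]
    field_simp
  rw [Finset.sum_congr rfl hterm, ← Finset.mul_sum, aux_sum k (1/2) h12, aux_gamma k]
  have hfk : ((k.factorial : ℂ)) ≠ 0 := by exact_mod_cast k.factorial_ne_zero
  have hc : (1/(2*(k.factorial:ℂ))) * ((k.factorial:ℂ)/(∏ j ∈ range (k+1), ((1:ℂ)/2+j)))
      = 1/(2*∏ j ∈ range (k+1), ((1:ℂ)/2+j)) := by
    rw [div_mul_div_comm]
    rw [one_mul]
    rw [div_eq_div_iff (by exact mul_ne_zero (mul_ne_zero two_ne_zero hfk) hPne)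
      (mul_ne_zero two_ne_zero hPne)]
    ring
  calc z^(2*k+1) * (2/(Real.sqrt π:ℂ)) * (1/(2*(k.factorial:ℂ)))
        * ((k.factorial:ℂ)/(∏ j ∈ range (k+1), ((1:ℂ)/2+j)))
      = z^(2*k+1) * (2/(Real.sqrt π:ℂ)) * ((1/(2*(k.factorial:ℂ)))
        * ((k.factorial:ℂ)/(∏ j ∈ range (k+1), ((1:ℂ)/2+j)))) := by ring
    _ = z^(2*k+1) * (2/(Real.sqrt π:ℂ)) * (1/(2*∏ j ∈ range (k+1), ((1:ℂ)/2+j))) := by rw [hc]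
    _ = z^(2*k+1) * ((Real.sqrt π:ℂ) * ∏ j ∈ range (k+1), ((1:ℂ)/2+j))⁻¹ := by
        rw [mul_inv, mul_assoc]
        congr 1
        rw [div_mul_div_comm, mul_one,
          div_eq_iff (mul_ne_zero hs (mul_ne_zero two_ne_zero hPne))]
        rw [show ((Real.sqrt π:ℂ))⁻¹ * (∏ j ∈ range (k+1), ((1:ℂ)/2+j))⁻¹
              * ((Real.sqrt π:ℂ) * (2*∏ j ∈ range (k+1), ((1:ℂ)/2+j)))
            = 2*(((Real.sqrt π:ℂ))⁻¹*(Real.sqrt π:ℂ))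
              * ((∏ j ∈ range (k+1), ((1:ℂ)/2+j))⁻¹ * ∏ j ∈ range (k+1), ((1:ℂ)/2+j)) by ring,
          inv_mul_cancel₀ hs, inv_mul_cancel₀ hPne]
        ring

lemma odd_part (z : ℂ) :
    HasSum (fun n : ℕ => z^(2*n+1) * (Complex.Gamma ((n:ℂ) + 3/2))⁻¹)
      (Complex.exp (z^2) * ((2 / (Real.sqrt π : ℂ)) *
        ∑' n : ℕ, (-1:ℂ)^n * z^(2*n+1) / ((n.factorial : ℂ) * (2*n+1)))) := by
  have hgsum : HasSum (gg z) (Complex.exp (z^2)) := by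
    rw [Complex.exp_eq_exp_ℂ]
    exact NormedSpace.expSeries_div_hasSum_exp (z^2)
  have hth : ∑' n, hh z n = (2 / (Real.sqrt π : ℂ)) *
      ∑' n : ℕ, (-1:ℂ)^n * z^(2*n+1) / ((n.factorial : ℂ) * (2*n+1)) := tsum_mul_left
  have hprod : Summable fun k => ∑ kl ∈ Finset.HasAntidiagonal.antidiagonal k, gg z kl.1 * hh z kl.2 :=
    (summable_norm_sum_mul_antidiagonal_of_summable_norm (hg_norm z) (hh_norm z)).of_norm
  have hps := hprod.hasSum
  rw [← tsum_mul_tsum_eq_tsum_sum_antidiagonal_of_summable_norm (hg_norm z) (hh_norm z),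
    hgsum.tsum_eq, hth] at hps
  simpa only [key_coeff z] using hps

theorem main_aux (z : ℂ) :
    (∑' k : ℕ, z ^ k * (Complex.Gamma ((((1:ℝ)/2 : ℝ) : ℂ) * k + 1))⁻¹)
      = Complex.exp (z ^ 2) * (1 - (2 / (Real.sqrt π : ℂ)) *
          ∑' n : ℕ, (-1:ℂ) ^ n * (-z) ^ (2 * n + 1) / ((n.factorial : ℂ) * (2 * n + 1))) := by
  set E := ∑' n : ℕ, (-1:ℂ)^n * z^(2*n+1) / ((n.factorial : ℂ) * (2*n+1)) with hE
  set f : ℕ → ℂ := fun k => z ^ k * (Complex.Gamma ((((1:ℝ)/2 : ℝ) : ℂ) * k + 1))⁻¹ with hf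
  have he : HasSum (fun n => f (2*n)) (Complex.exp (z^2)) := by
    have hgsum : HasSum (gg z) (Complex.exp (z^2)) := by
      rw [Complex.exp_eq_exp_ℂ]
      exact NormedSpace.expSeries_div_hasSum_exp (z^2)
    refine HasSum.congr_fun hgsum ?_
    intro n
    show f (2*n) = gg z n
    rw [hf]
    simp only
    rw [show (((1:ℝ)/2 : ℝ) : ℂ) * ((2*n : ℕ):ℂ) + 1 = (n:ℂ) + 1 by push_cast; ring]
    rw [Complex.Gamma_nat_eq_factorial, pow_mul]
    show (z^2)^n * ((n.factorial:ℂ))⁻¹ = (z^2)^n / (n.factorial:ℂ)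
    rw [div_eq_mul_inv]
  have ho : HasSum (fun n => f (2*n+1)) (Complex.exp (z^2) * ((2 / (Real.sqrt π : ℂ)) * E)) := by
    refine HasSum.congr_fun (odd_part z) ?_
    intro n
    show f (2*n+1) = _
    rw [hf]
    simp only
    rw [show (((1:ℝ)/2 : ℝ) : ℂ) * ((2*n+1 : ℕ):ℂ) + 1 = (n:ℂ) + 3/2 by push_cast; ring]
  have total := he.even_add_odd ho
  have hneg : ∀ n : ℕ, (-1:ℂ)^n * (-z)^(2*n+1) / ((n.factorial : ℂ) * (2*n+1))
      = -((-1:ℂ)^n * z^(2*n+1) / ((n.factorial : ℂ) * (2*n+1))) := by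
    intro n
    rw [Odd.neg_pow (odd_two_mul_add_one n)]
    ring
  rw [tsum_congr hneg, tsum_neg, ← hE]
  rw [total.tsum_eq]
  ring
end main

end MLAux

theorem mittagLeffler_half_one (z : ℂ) :
    mittagLeffler (1 / 2) 1 z = Complex.exp (z ^ 2) * erfc (-z) := by
  rw [mittagLeffler, erfc]
  exact MLAux.main_aux z
end

section
/- For every m ∈ ℕ and all z ∈ ℂ, the m-th derivative of the Mittag-Leffler function satisfies (d/dz)^m E_{α,β}(z) = m! · E^{m+1}_{α,β+αm}(z). -/
open scoped Real

/-- The generalized Mittag-Leffler (Prabhakar) function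
`E^ρ_{α,β}(z) = ∑ (ρ)_k z^k / (Γ(αk+β) k!)`. -/
noncomputable def prabhakar (ρ : ℂ) (α : ℝ) (β : ℂ) (z : ℂ) : ℂ :=
  ∑' k : ℕ, (ascPochhammer ℂ k).eval ρ * z ^ k *
    ((Complex.Gamma ((α : ℂ) * k + β))⁻¹ / (k.factorial : ℂ))

open Finset Filter Complex FormalMultilinearSeries Polynomial



private lemma Gamma_shift (w : ℂ) (hw : 1 ≤ w.re) (n : ℕ) :
    Complex.Gamma (w + n) = Complex.Gamma w * ∏ i ∈ Finset.range n, (w + i) := by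
  induction n with
  | zero => simp
  | succ n ih =>
    have hne : w + (n : ℂ) ≠ 0 := by
      intro h
      have h2 := congrArg Complex.re h
      simp only [Complex.add_re, Complex.natCast_re, Complex.zero_re] at h2
      have : (0:ℝ) ≤ (n:ℝ) := Nat.cast_nonneg n
      linarith
    have h1 : (w + ((n+1 : ℕ) : ℂ)) = (w + n) + 1 := by push_cast; ring
    rw [h1, Complex.Gamma_add_one _ hne, ih, Finset.prod_range_succ]
    ring

private lemma Gamma_lower (β : ℂ) :
    ∃ ε > 0, ∀ w : ℂ, w.im = β.im → 1 ≤ w.re → w.re ≤ 2 → ε ≤ ‖Complex.Gamma w‖ := by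
  have hne : ∀ x : ℝ, 1 ≤ x → ∀ m : ℕ, ((x:ℂ) + β.im * Complex.I) ≠ -m := by
    intro x hx m h
    have h2 := congrArg Complex.re h
    simp only [Complex.add_re, Complex.ofReal_re, Complex.mul_re, Complex.ofReal_im,
      Complex.I_re, Complex.I_im, Complex.neg_re, Complex.natCast_re] at h2
    have : (0:ℝ) ≤ (m:ℝ) := Nat.cast_nonneg m
    nlinarith
  have hcont : ContinuousOn (fun x : ℝ => ‖Complex.Gamma ((x:ℂ) + β.im * Complex.I)‖)
      (Set.Icc 1 2) := by
    intro x hx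
    have hdiff : DifferentiableAt ℂ Complex.Gamma ((x:ℂ) + β.im * Complex.I) :=
      Complex.differentiableAt_Gamma _ (hne x hx.1)
    have hc2 : ContinuousAt (fun x : ℝ => (x:ℂ) + β.im * Complex.I) x := by fun_prop
    have : ContinuousAt (Complex.Gamma ∘ (fun x : ℝ => (x:ℂ) + β.im * Complex.I)) x :=
      ContinuousAt.comp (f := fun x : ℝ => (x:ℂ) + β.im * Complex.I) (x := x) hdiff.continuousAt hc2
    exact this.norm.continuousWithinAt
  obtain ⟨x₀, hx₀, hmin⟩ := isCompact_Icc.exists_isMinOn (Set.nonempty_Icc.2 one_le_two) hcont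
  refine ⟨‖Complex.Gamma ((x₀:ℂ) + β.im * Complex.I)‖, ?_, ?_⟩
  · have := Complex.Gamma_ne_zero_of_re_pos (s := (x₀:ℂ) + β.im * Complex.I) ?_
    · exact norm_pos_iff.mpr this
    · simp only [Complex.add_re, Complex.ofReal_re, Complex.mul_re, Complex.ofReal_im,
        Complex.I_re, Complex.I_im]
      nlinarith [hx₀.1, hx₀.2]
  · intro w him h1 h2
    have hw : ((w.re : ℂ) + β.im * Complex.I) = w := by
      rw [← him, Complex.re_add_im w]
    have h3 := hmin (Set.mem_Icc.2 ⟨h1, h2⟩)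
    simp only [Set.mem_setOf_eq, hw] at h3
    exact h3

private lemma summable_gamma_aux (α : ℝ) (hα : 0 < α) (β : ℂ) (m : ℕ) (r : ℝ) (hr : 0 ≤ r) :
    Summable (fun k : ℕ => ((k:ℝ)+1)^m * r^k * ‖(Complex.Gamma ((α:ℂ)*k+β))⁻¹‖) := by
  obtain ⟨ε, hε, hεle⟩ := Gamma_lower β
  set a : ℝ := α/2 with ha_def
  have ha0 : 0 < a := by positivity
  set M : ℕ := ⌈(2*r+2) ^ (1/a)⌉₊ with hM_def
  have hbpos : (0:ℝ) < 2*r+2 := by linarith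
  have hbase : (2*r+2 : ℝ) ≤ ((M:ℝ)+1)^a := by
    have h1 : (2*r+2:ℝ)^(1/a) ≤ (M:ℝ) + 1 := (Nat.le_ceil _).trans (by linarith)
    have h2 : ((2*r+2:ℝ)^(1/a))^a ≤ ((M:ℝ)+1)^a :=
      Real.rpow_le_rpow (Real.rpow_nonneg hbpos.le _) h1 ha0.le
    rwa [← Real.rpow_mul hbpos.le, one_div, inv_mul_cancel₀ ha0.ne', Real.rpow_one] at h2
  -- summable majorant
  have hg : Summable (fun k : ℕ => (ε⁻¹ * ((M:ℝ)+1)^M) * (((k:ℝ)+1)^m * (1/2)^k)) := by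
    have base : Summable (fun n : ℕ => (n:ℝ)^m * (1/2)^n) :=
      summable_pow_mul_geometric_of_norm_lt_one m
        (by rw [Real.norm_eq_abs, abs_lt]; constructor <;> norm_num)
    have shifted :=
      (summable_nat_add_iff (f := fun n : ℕ => (n:ℝ)^m * (1/2:ℝ)^n) 1).2 base
    have h2 : Summable (fun n : ℕ => ((n:ℝ)+1)^m * (1/2:ℝ)^n) := by
      have := shifted.mul_left 2
      refine this.congr fun n => ?_
      push_cast
      ring
    exact h2.mul_left _
  refine Summable.of_norm_bounded_eventually_nat hg ?_
  have hev : ∀ᶠ k : ℕ in atTop, (M:ℝ) + 4 + |β.re| ≤ a * k := by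
    have ht : Tendsto (fun k : ℕ => a * k) atTop atTop :=
      Tendsto.const_mul_atTop ha0 tendsto_natCast_atTop_atTop
    exact ht.eventually_ge_atTop _
  filter_upwards [hev] with k hk
  set s : ℂ := (α:ℂ)*k + β with hs_def
  have hsre : s.re = α*k + β.re := by
    simp [hs_def, Complex.add_re, Complex.mul_re]
  have hsim : s.im = β.im := by
    simp [hs_def, Complex.add_im, Complex.mul_im]
  have hak : 0 ≤ a * k := by positivity
  have habs : -|β.re| ≤ β.re := neg_abs_le _
  have hsge : (M:ℝ) + 4 + a*k ≤ s.re := by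
    rw [hsre]
    have : α * k = 2 * (a * k) := by rw [ha_def]; ring
    linarith
  set j : ℕ := ⌊s.re⌋₊ - 1 with hj_def
  have hsre0 : (0:ℝ) ≤ s.re := by linarith
  have hfl1 : 1 ≤ ⌊s.re⌋₊ := Nat.le_floor (by push_cast; linarith)
  have hjcast : (j:ℝ) = (⌊s.re⌋₊ : ℝ) - 1 := by
    rw [hj_def, Nat.cast_sub hfl1, Nat.cast_one]
  have hfle : (⌊s.re⌋₊ : ℝ) ≤ s.re := Nat.floor_le hsre0
  have hflt : s.re < (⌊s.re⌋₊ : ℝ) + 1 := Nat.lt_floor_add_one _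
  have hjle : (j:ℝ) ≤ s.re - 1 := by rw [hjcast]; linarith
  have hjge : s.re - 2 ≤ (j:ℝ) := by rw [hjcast]; linarith
  have hjM : M ≤ j := by
    have : (M:ℝ) ≤ (j:ℝ) := by linarith
    exact_mod_cast this
  have hjak : a*k ≤ (j:ℝ) := by linarith
  set w : ℂ := s - j with hw_def
  have hwim : w.im = β.im := by simp [hw_def, hsim]
  have hwre : w.re = s.re - j := by simp [hw_def]
  have h1w : 1 ≤ w.re := by rw [hwre]; linarith
  have h2w : w.re ≤ 2 := by rw [hwre]; linarith
  have hws : w + j = s := by rw [hw_def]; ring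
  have hΓ : Complex.Gamma s = Complex.Gamma w * ∏ i ∈ Finset.range j, (w + i) := by
    rw [← hws]; exact Gamma_shift w h1w j
  have hprod : ((j.factorial : ℝ)) ≤ ∏ i ∈ Finset.range j, ‖w + (i:ℂ)‖ := by
    have h1 : ∏ i ∈ Finset.range j, ((i:ℝ)+1) ≤ ∏ i ∈ Finset.range j, ‖w + (i:ℂ)‖ := by
      refine Finset.prod_le_prod (fun i _ => by positivity) (fun i _ => ?_)
      have hre : (w + (i:ℂ)).re = w.re + i := by simp
      have := Complex.re_le_norm (w + (i:ℂ))
      have hi : (0:ℝ) ≤ (i:ℝ) := Nat.cast_nonneg i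
      linarith [hre ▸ this]
    have h2 : ∏ i ∈ Finset.range j, ((i:ℝ)+1) = (j.factorial : ℝ) := by
      rw [← Finset.prod_range_add_one_eq_factorial j, Nat.cast_prod]
      push_cast
      rfl
    linarith [h2 ▸ h1]
  have hΓnorm : ε * (j.factorial : ℝ) ≤ ‖Complex.Gamma s‖ := by
    rw [hΓ, norm_mul, norm_prod]
    exact mul_le_mul (hεle w hwim h1w h2w) hprod (by positivity) (norm_nonneg _)
  have hjfacpos : (0:ℝ) < (j.factorial : ℝ) := by exact_mod_cast j.factorial_pos
  have hΓpos : 0 < ‖Complex.Gamma s‖ := lt_of_lt_of_le (by positivity) hΓnorm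
  have hinv : ‖(Complex.Gamma s)⁻¹‖ ≤ ε⁻¹ * ((j.factorial : ℝ))⁻¹ := by
    rw [norm_inv, ← mul_inv]
    exact inv_anti₀ (by positivity) hΓnorm
  -- factorial vs pow
  have hfacpow : ((M:ℝ)+1)^j ≤ ((M:ℝ)+1)^M * (j.factorial : ℝ) := by
    have hn : (M+1)^j ≤ (M+1)^M * j.factorial := by
      have h1 : M.factorial * (M+1)^(j-M) ≤ (M + (j-M)).factorial :=
        Nat.factorial_mul_pow_le_factorial
      rw [Nat.add_sub_cancel' hjM] at h1
      have h2 : (M+1)^(j-M) ≤ j.factorial :=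
        le_trans (Nat.le_mul_of_pos_left _ M.factorial_pos) h1
      calc (M+1)^j = (M+1)^M * (M+1)^(j-M) := by
            rw [← pow_add, Nat.add_sub_cancel' hjM]
        _ ≤ (M+1)^M * j.factorial := Nat.mul_le_mul_left _ h2
    exact_mod_cast hn
  have hpow : (2*r+2 : ℝ)^k ≤ ((M:ℝ)+1)^j := by
    have hM1 : (1:ℝ) ≤ (M:ℝ)+1 := by
      have := Nat.cast_nonneg (α := ℝ) M
      linarith
    calc (2*r+2:ℝ)^k ≤ (((M:ℝ)+1)^a)^k := pow_le_pow_left₀ hbpos.le hbase k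
      _ = ((M:ℝ)+1)^(a*(k:ℝ)) := by
          have hM0 : (0:ℝ) ≤ (M:ℝ)+1 := by positivity
          rw [← Real.rpow_natCast (((M:ℝ)+1)^a) k, ← Real.rpow_mul hM0]
      _ ≤ ((M:ℝ)+1)^((j:ℝ)) := Real.rpow_le_rpow_of_exponent_le hM1 hjak
      _ = ((M:ℝ)+1)^j := Real.rpow_natCast _ _
  -- final
  have hterm : ((k:ℝ)+1)^m * r^k * ‖(Complex.Gamma s)⁻¹‖
      ≤ (ε⁻¹ * ((M:ℝ)+1)^M) * (((k:ℝ)+1)^m * (1/2)^k) := by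
    have hrk : r^k * ((j.factorial : ℝ))⁻¹ ≤ ((M:ℝ)+1)^M * (1/2)^k := by
      have h1 : ((j.factorial : ℝ))⁻¹ ≤ ((M:ℝ)+1)^M / ((M:ℝ)+1)^j := by
        rw [le_div_iff₀ (by positivity)]
        rw [inv_mul_eq_div, div_le_iff₀ hjfacpos]
        linarith [hfacpow]
      have h2 : r^k * (((M:ℝ)+1)^M / ((M:ℝ)+1)^j) ≤ ((M:ℝ)+1)^M * (1/2)^k := by
        have h3 : r^k / ((M:ℝ)+1)^j ≤ (1/2:ℝ)^k := by
          have h4 : r^k / ((M:ℝ)+1)^j ≤ r^k / (2*r+2)^k := by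
            apply div_le_div_of_nonneg_left (by positivity) (by positivity) hpow
          have h5 : r^k / (2*r+2)^k = (r/(2*r+2))^k := by rw [div_pow]
          have h6 : (r/(2*r+2))^k ≤ (1/2:ℝ)^k := by
            apply pow_le_pow_left₀ (by positivity)
            rw [div_le_div_iff₀ hbpos (by norm_num)]
            linarith
          calc r^k / ((M:ℝ)+1)^j ≤ r^k / (2*r+2)^k := h4
            _ = (r/(2*r+2))^k := h5
            _ ≤ (1/2:ℝ)^k := h6
        calc r^k * (((M:ℝ)+1)^M / ((M:ℝ)+1)^j)
            = ((M:ℝ)+1)^M * (r^k / ((M:ℝ)+1)^j) := by ring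
          _ ≤ ((M:ℝ)+1)^M * (1/2)^k := by
              apply mul_le_mul_of_nonneg_left h3 (by positivity)
      calc r^k * ((j.factorial : ℝ))⁻¹ ≤ r^k * (((M:ℝ)+1)^M / ((M:ℝ)+1)^j) := by
            apply mul_le_mul_of_nonneg_left h1 (by positivity)
        _ ≤ ((M:ℝ)+1)^M * (1/2)^k := h2
    calc ((k:ℝ)+1)^m * r^k * ‖(Complex.Gamma s)⁻¹‖
        ≤ ((k:ℝ)+1)^m * r^k * (ε⁻¹ * ((j.factorial : ℝ))⁻¹) := by
          apply mul_le_mul_of_nonneg_left hinv (by positivity)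
      _ = (((k:ℝ)+1)^m * ε⁻¹) * (r^k * ((j.factorial : ℝ))⁻¹) := by ring
      _ ≤ (((k:ℝ)+1)^m * ε⁻¹) * (((M:ℝ)+1)^M * (1/2)^k) := by
          apply mul_le_mul_of_nonneg_left hrk (by positivity)
      _ = (ε⁻¹ * ((M:ℝ)+1)^M) * (((k:ℝ)+1)^m * (1/2)^k) := by ring
  have hnn : (0:ℝ) ≤ ((k:ℝ)+1)^m * r^k * ‖(Complex.Gamma s)⁻¹‖ := by positivity
  rw [Real.norm_of_nonneg hnn]
  exact hterm

private lemma derivSeries_ofScalars_apply (c : ℕ → ℂ) (n : ℕ) (z w : ℂ) :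
    ((FormalMultilinearSeries.ofScalars ℂ c).derivSeries n (fun _ ↦ z)) w
      = ((n:ℂ)+1) * c (n+1) * z^n * w := by
  set p := FormalMultilinearSeries.ofScalars ℂ c with hp
  simp only [FormalMultilinearSeries.derivSeries,
    ContinuousLinearMap.compFormalMultilinearSeries_apply,
    FormalMultilinearSeries.changeOriginSeries,
    ContinuousLinearMap.compContinuousMultilinearMap_coe, ContinuousLinearEquiv.coe_coe,
    LinearIsometryEquiv.coe_coe, Function.comp_apply, ContinuousMultilinearMap.sum_apply,
    map_sum, ContinuousLinearMap.coe_sum', Finset.sum_apply,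
    continuousMultilinearCurryFin1_apply, Matrix.zero_empty]
  have hterm : ∀ (s : Finset (Fin (1 + n))) (hs : s.card = n),
      (p.changeOriginSeriesTerm 1 n s hs (fun _ ↦ z)) (Fin.snoc 0 w)
        = c (n+1) * z^n * w := by
    intro s hs
    have h0 : (Fin.snoc 0 w : Fin 1 → ℂ) = fun _ => w := by
      funext i
      fin_cases i <;> rfl
    rw [h0, FormalMultilinearSeries.changeOriginSeriesTerm_apply]
    have : p (1 + n) (s.piecewise (fun _ => z) fun _ => w)
        = c (1+n) * ((∏ i ∈ s, z) * ∏ i ∈ sᶜ, w) := by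
      rw [hp]
      simp only [FormalMultilinearSeries.ofScalars, ContinuousMultilinearMap.smul_apply,
        ContinuousMultilinearMap.mkPiAlgebraFin_apply, smul_eq_mul]
      congr 1
      rw [List.prod_ofFn, Finset.prod_piecewise, Finset.univ_inter,
        ← Finset.compl_eq_univ_sdiff]
    rw [this, Finset.prod_const, Finset.prod_const, Finset.card_compl, hs,
      Fintype.card_fin]
    have hcard : 1 + n - n = 1 := by omega
    rw [hcard, pow_one, add_comm 1 n]
    ring
  rw [Finset.sum_congr rfl fun s _ => hterm s.1 s.2]
  rw [Finset.sum_const]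
  have hcard : (Finset.univ : Finset {s : Finset (Fin (1 + n)) // s.card = n}).card = n + 1 := by
    rw [← Fintype.card, Fintype.card_subtype, ← Finset.powerset_univ,
      ← Finset.powersetCard_eq_filter, Finset.card_powersetCard, Finset.card_univ,
      Fintype.card_fin]
    rw [add_comm 1 n, Nat.choose_succ_self_right]
  rw [hcard, nsmul_eq_mul]
  push_cast
  ring

private lemma hasDerivAt_tsum_pow (c : ℕ → ℂ)
    (h : ∀ r : NNReal, Summable (fun k : ℕ => ‖c k‖ * (r:ℝ)^k)) (z : ℂ) :
    HasDerivAt (fun z : ℂ => ∑' k : ℕ, c k * z^k)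
      (∑' k : ℕ, ((k:ℂ)+1) * c (k+1) * z^k) z := by
  set p := FormalMultilinearSeries.ofScalars ℂ c with hp
  have hpn : ∀ n, ‖p n‖ ≤ ‖c n‖ := fun n => by
    rw [hp]
    refine (norm_smul_le (c n) (ContinuousMultilinearMap.mkPiAlgebraFin ℂ n ℂ)).trans ?_
    rw [ContinuousMultilinearMap.norm_mkPiAlgebraFin, mul_one]
  have hrad : p.radius = ⊤ := by
    apply p.radius_eq_top_of_summable_norm
    intro r
    refine Summable.of_nonneg_of_le (fun n => by positivity) (fun n => ?_) (h r)
    exact mul_le_mul_of_nonneg_right (hpn n) (by positivity)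
  have hball : HasFPowerSeriesOnBall p.sum p 0 ⊤ := by
    rw [← hrad]
    exact p.hasFPowerSeriesOnBall (by rw [hrad]; exact ENNReal.zero_lt_top)
  have hz : z ∈ Metric.eball (0:ℂ) ⊤ := by simp
  have hfd := hball.fderiv
  have hsum := hfd.hasSum hz
  rw [zero_add] at hsum
  have happ := hsum.mapL (ContinuousLinearMap.apply ℂ ℂ (1:ℂ))
  have hterm : (fun n => (ContinuousLinearMap.apply ℂ ℂ (1:ℂ)) (p.derivSeries n fun _ => z))
      = fun n : ℕ => ((n:ℂ)+1) * c (n+1) * z^n := by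
    funext n
    have := derivSeries_ofScalars_apply c n z 1
    simpa [ContinuousLinearMap.apply, hp, FormalMultilinearSeries.coeff_ofScalars] using this
  rw [hterm] at happ
  have hps : (fun z : ℂ => ∑' k : ℕ, c k * z^k) = p.sum := by
    funext y
    rw [FormalMultilinearSeries.sum]
    refine tsum_congr fun n => ?_
    rw [hp, FormalMultilinearSeries.ofScalars_apply_eq, smul_eq_mul]
  rw [hps]
  have hdiff : DifferentiableAt ℂ p.sum z :=
    hball.differentiableOn.differentiableAt (Metric.isOpen_eball.mem_nhds hz)
  have hderiv : deriv p.sum z = ∑' k : ℕ, ((k:ℂ)+1) * c (k+1) * z^k := by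
    rw [← fderiv_apply_one_eq_deriv]
    have : (ContinuousLinearMap.apply ℂ ℂ (1:ℂ)) (fderiv ℂ p.sum z) = fderiv ℂ p.sum z 1 := rfl
    rw [← this, ← happ.tsum_eq]
  have := hdiff.hasDerivAt
  rwa [hderiv] at this

private lemma poch_div_fact_norm (m k : ℕ) :
    ‖(ascPochhammer ℂ k).eval ((m:ℂ)+1) / (k.factorial : ℂ)‖
      ≤ ((m:ℝ)+1)^m * ((k:ℝ)+1)^m := by
  have h1 : (ascPochhammer ℂ k).eval ((m:ℂ)+1) = ((m+1 : ℕ).ascFactorial k : ℂ) := by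
    have h := ascPochhammer_eval_cast (S := ℂ) k (m+1)
    rw [ascPochhammer_nat_eq_ascFactorial] at h
    push_cast at h
    exact h.symm
  have h2 : (m+1 : ℕ).ascFactorial k = k.factorial * (m+k).choose k :=
    Nat.ascFactorial_eq_factorial_mul_choose m k
  have hf0 : ((k.factorial : ℂ)) ≠ 0 := Nat.cast_ne_zero.2 k.factorial_pos.ne'
  have h3 : (ascPochhammer ℂ k).eval ((m:ℂ)+1) / (k.factorial : ℂ)
      = (((m+k).choose k : ℕ) : ℂ) := by
    rw [h1, h2]
    push_cast
    field_simp
  rw [h3]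
  have h4 : ((m+k).choose k : ℝ) ≤ ((m:ℝ)+1)^m * ((k:ℝ)+1)^m := by
    have e1 : (m+k).choose k = (m+k).choose m := by
      have h := Nat.choose_symm (Nat.le_add_right m k)
      simpa [Nat.add_sub_cancel_left] using h
    have e2 : (m+k).choose m ≤ (m+k)^m := Nat.choose_le_pow _ _
    have e3 : ((m+k : ℕ):ℝ) ≤ ((m:ℝ)+1) * ((k:ℝ)+1) := by
      push_cast
      nlinarith [Nat.cast_nonneg (α := ℝ) m, Nat.cast_nonneg (α := ℝ) k]
    calc ((m+k).choose k : ℝ) = ((m+k).choose m : ℝ) := by rw [e1]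
      _ ≤ (((m+k)^m : ℕ) : ℝ) := by exact_mod_cast e2
      _ = (((m+k):ℕ):ℝ)^m := by push_cast; ring
      _ ≤ (((m:ℝ)+1) * ((k:ℝ)+1))^m := by
          apply pow_le_pow_left₀ (Nat.cast_nonneg _) e3
      _ = ((m:ℝ)+1)^m * ((k:ℝ)+1)^m := mul_pow _ _ _
  calc ‖(((m+k).choose k : ℕ) : ℂ)‖ = ((m+k).choose k : ℝ) := by
        rw [Complex.norm_natCast]
    _ ≤ ((m:ℝ)+1)^m * ((k:ℝ)+1)^m := h4

private lemma prabhakar_summable (α : ℝ) (hα : 0 < α) (β : ℂ) (m : ℕ) (r : NNReal) :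
    Summable (fun k : ℕ => ‖(ascPochhammer ℂ k).eval ((m:ℂ)+1) *
      ((Complex.Gamma ((α:ℂ)*k+β))⁻¹ / (k.factorial : ℂ))‖ * (r:ℝ)^k) := by
  have hbig := (summable_gamma_aux α hα β m r r.coe_nonneg).mul_left (((m:ℝ)+1)^m)
  refine Summable.of_nonneg_of_le (fun k => by positivity) (fun k => ?_) hbig
  have he : (ascPochhammer ℂ k).eval ((m:ℂ)+1) *
      ((Complex.Gamma ((α:ℂ)*k+β))⁻¹ / (k.factorial : ℂ))
      = ((ascPochhammer ℂ k).eval ((m:ℂ)+1) / (k.factorial : ℂ)) *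
        (Complex.Gamma ((α:ℂ)*k+β))⁻¹ := by ring
  rw [he, norm_mul]
  have h1 := poch_div_fact_norm m k
  calc ‖(ascPochhammer ℂ k).eval ((m:ℂ)+1) / (k.factorial : ℂ)‖ *
        ‖(Complex.Gamma ((α:ℂ)*k+β))⁻¹‖ * (r:ℝ)^k
      ≤ (((m:ℝ)+1)^m * ((k:ℝ)+1)^m) * ‖(Complex.Gamma ((α:ℂ)*k+β))⁻¹‖ * (r:ℝ)^k := by
        apply mul_le_mul_of_nonneg_right (mul_le_mul_of_nonneg_right h1 (norm_nonneg _))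
          (by positivity)
    _ = ((m:ℝ)+1)^m * (((k:ℝ)+1)^m * (r:ℝ)^k * ‖(Complex.Gamma ((α:ℂ)*k+β))⁻¹‖) := by
        ring

private lemma prabhakar_hasDerivAt (α : ℝ) (hα : 0 < α) (β : ℂ) (m : ℕ) (z : ℂ) :
    HasDerivAt (prabhakar ((m:ℂ)+1) α β)
      (((m:ℂ)+1) * prabhakar ((m:ℂ)+2) α (β + α) z) z := by
  set c : ℕ → ℂ := fun k => (ascPochhammer ℂ k).eval ((m:ℂ)+1) *
    ((Complex.Gamma ((α:ℂ)*k+β))⁻¹ / (k.factorial : ℂ)) with hc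
  have hsum : ∀ r : NNReal, Summable (fun k : ℕ => ‖c k‖ * (r:ℝ)^k) := fun r =>
    prabhakar_summable α hα β m r
  have hfun : prabhakar ((m:ℂ)+1) α β = fun z : ℂ => ∑' k : ℕ, c k * z^k := by
    funext y
    rw [prabhakar]
    exact tsum_congr fun k => by rw [hc]; ring
  have hd := hasDerivAt_tsum_pow c hsum z
  rw [hfun]
  convert hd using 1
  rw [prabhakar, ← tsum_mul_left]
  refine tsum_congr fun k => ?_
  have hk0 : ((k:ℂ)+1) ≠ 0 := Nat.cast_add_one_ne_zero k
  have hf0 : ((k.factorial : ℂ)) ≠ 0 := Nat.cast_ne_zero.2 k.factorial_pos.ne'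
  have hpoch : (ascPochhammer ℂ (k+1)).eval ((m:ℂ)+1)
      = ((m:ℂ)+1) * (ascPochhammer ℂ k).eval ((m:ℂ)+2) := by
    rw [ascPochhammer_succ_left, Polynomial.eval_mul, Polynomial.eval_X,
      Polynomial.eval_comp, Polynomial.eval_add, Polynomial.eval_X, Polynomial.eval_one]
    ring_nf
  have hgamma : (α:ℂ)*((k+1:ℕ):ℂ)+β = (α:ℂ)*(k:ℂ) + (β + α) := by
    push_cast
    ring
  have hfact : (((k+1).factorial : ℕ) : ℂ) = ((k:ℂ)+1) * (k.factorial : ℂ) := by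
    rw [Nat.factorial_succ]
    push_cast
    ring
  rw [hc]
  simp only []
  rw [hpoch, hgamma, hfact]
  set G := (Complex.Gamma ((α:ℂ)*(k:ℂ) + (β + α)))⁻¹ with hG
  field_simp

theorem iteratedDeriv_mittagLeffler (α : ℝ) (hα : 0 < α) (β : ℂ) (m : ℕ) (z : ℂ) :
    iteratedDeriv m (mittagLeffler α β) z
      = (m.factorial : ℂ) * prabhakar (m + 1) α (β + (α : ℂ) * m) z := by
  induction m generalizing z with
  | zero =>
    rw [iteratedDeriv_zero]
    simp only [Nat.factorial_zero, Nat.cast_one, one_mul, Nat.cast_zero, mul_zero, add_zero,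
      zero_add]
    rw [mittagLeffler, prabhakar]
    refine tsum_congr fun k => ?_
    have h1 : (ascPochhammer ℂ k).eval (1:ℂ) = (k.factorial : ℂ) := by
      have h := ascPochhammer_eval_cast (S := ℂ) k 1
      rw [ascPochhammer_nat_eq_ascFactorial, Nat.one_ascFactorial, Nat.cast_one] at h
      exact h.symm
    rw [h1]
    have hf0 : ((k.factorial : ℂ)) ≠ 0 := Nat.cast_ne_zero.2 k.factorial_pos.ne'
    field_simp
  | succ n ih =>
    rw [iteratedDeriv_succ]
    have hfun : iteratedDeriv n (mittagLeffler α β)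
        = fun y => (n.factorial : ℂ) * prabhakar ((n:ℂ) + 1) α (β + (α:ℂ)*n) y :=
      funext fun y => ih y
    rw [hfun]
    have hd := (prabhakar_hasDerivAt α hα (β + (α:ℂ)*n) n z).const_mul ((n.factorial : ℂ))
    rw [hd.deriv]
    have e1 : (((n+1:ℕ)):ℂ)+1 = (n:ℂ)+2 := by push_cast; ring
    have e2 : β + (α:ℂ)*((n+1:ℕ):ℂ) = β + (α:ℂ)*n + α := by push_cast; ring
    rw [e1, e2, Nat.factorial_succ]
    push_cast
    ring
end

section
/- Let B = [[0,1,0,0],[0,0,1,0],[0,0,0,1],[0,0,0,p]] with p ≠ 0. Then E_{1/2,1/2}(B) = ∑_{k=0}^∞ B^k / Γ((k+1)/2) equals the upper-triangular matrix with rows: (1/√π, 1, 2/√π, p^{−3}E_{1/2,1/2}(p) − 1/(p³√π) − 1/p² − 2/(p√π)), (0, 1/√π, 1, p^{−2}E_{1/2,1/2}(p) − 1/(p²√π) − 1/p), (0, 0, 1/√π, p^{−1}E_{1/2,1/2}(p) − 1/(p√π)), (0, 0, 0, E_{1/2,1/2}(p)). -/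
open scoped Real

/-- The matrix Mittag-Leffler function `E_{α,β}(A) = ∑ A^k / Γ(αk+β)`. -/
noncomputable def mittagLefflerMatrix {n : ℕ} (α : ℝ) (β : ℂ)
    (A : Matrix (Fin n) (Fin n) ℂ) : Matrix (Fin n) (Fin n) ℂ :=
  ∑' k : ℕ, (Complex.Gamma ((α : ℂ) * k + β))⁻¹ • A ^ k


lemma gammaHalfLB (m : ℕ) : Real.sqrt π * m.factorial / 2 ^ m ≤ Real.Gamma (m + 1 / 2) := by
  induction m with
  | zero =>
    rw [show ((0 : ℕ) : ℝ) + 1 / 2 = 1 / 2 by norm_num, Real.Gamma_one_half_eq]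
    simp
  | succ n ih =>
    have h : Real.Gamma ((n + 1 : ℕ) + 1 / 2) = ((n : ℝ) + 1 / 2) * Real.Gamma (n + 1 / 2) := by
      push_cast
      rw [show (n : ℝ) + 1 + 1 / 2 = ((n : ℝ) + 1 / 2) + 1 by ring,
        Real.Gamma_add_one (by positivity)]
    rw [h]
    have h2 : Real.sqrt π * (n + 1).factorial / 2 ^ (n + 1)
        = (((n : ℝ) + 1) / 2) * (Real.sqrt π * n.factorial / 2 ^ n) := by
      push_cast [Nat.factorial_succ]
      ring
    rw [h2]
    calc (((n : ℝ) + 1) / 2) * (Real.sqrt π * n.factorial / 2 ^ n)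
        ≤ (((n : ℝ) + 1) / 2) * Real.Gamma (n + 1 / 2) :=
          mul_le_mul_of_nonneg_left ih (by positivity)
      _ ≤ ((n : ℝ) + 1 / 2) * Real.Gamma (n + 1 / 2) :=
          mul_le_mul_of_nonneg_right (by linarith)
            (le_of_lt (Real.Gamma_pos_of_pos (by positivity)))

lemma summableML (z : ℂ) :
    Summable (fun k : ℕ => z ^ k * (Complex.Gamma (((1 / 2 : ℝ) : ℂ) * k + 1 / 2))⁻¹) := by
  have hπ : (0 : ℝ) < Real.sqrt π := Real.sqrt_pos.mpr Real.pi_pos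
  apply Summable.even_add_odd
  · refine Summable.of_norm (Summable.of_nonneg_of_le (fun _ => norm_nonneg _) (fun m => ?_)
      ((Real.summable_pow_div_factorial (2 * ‖z‖ ^ 2)).div_const (Real.sqrt π)))
    have harg : ((1 / 2 : ℝ) : ℂ) * (2 * m : ℕ) + 1 / 2 = (((m : ℝ) + 1 / 2 : ℝ) : ℂ) := by
      push_cast; ring
    have hgpos : 0 < Real.Gamma ((m : ℝ) + 1 / 2) := Real.Gamma_pos_of_pos (by positivity)
    have hlb := gammaHalfLB m
    have h1 : (0 : ℝ) < Real.sqrt π * m.factorial / 2 ^ m := by positivity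
    rw [harg, Complex.Gamma_ofReal, norm_mul, norm_pow, ← Complex.ofReal_inv,
      Complex.norm_real, Real.norm_eq_abs, abs_of_pos (by positivity)]
    calc ‖z‖ ^ (2 * m) * (Real.Gamma ((m : ℝ) + 1 / 2))⁻¹
        ≤ ‖z‖ ^ (2 * m) * (Real.sqrt π * m.factorial / 2 ^ m)⁻¹ := by
          gcongr
      _ = (2 * ‖z‖ ^ 2) ^ m / m.factorial / Real.sqrt π := by
          rw [pow_mul, mul_pow]
          have : (m.factorial : ℝ) ≠ 0 := Nat.cast_ne_zero.mpr m.factorial_ne_zero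
          field_simp
  · refine Summable.of_norm (Summable.of_nonneg_of_le (fun _ => norm_nonneg _) (fun m => ?_)
      ((Real.summable_pow_div_factorial (‖z‖ ^ 2)).mul_left ‖z‖))
    have harg : ((1 / 2 : ℝ) : ℂ) * (2 * m + 1 : ℕ) + 1 / 2 = ((m : ℂ) + 1) := by
      push_cast; ring
    rw [harg, Complex.Gamma_nat_eq_factorial, norm_mul, norm_pow, norm_inv,
      Complex.norm_natCast]
    rw [pow_succ, pow_mul, div_eq_mul_inv]
    exact le_of_eq (by ring)

set_option maxHeartbeats 1000000 in
theorem mittagLefflerMatrix_half_half (p : ℂ) (hp : p ≠ 0) :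
    mittagLefflerMatrix (1 / 2) (1 / 2)
      (!![0, 1, 0, 0;
          0, 0, 1, 0;
          0, 0, 0, 1;
          0, 0, 0, p] : Matrix (Fin 4) (Fin 4) ℂ)
    = !![1 / (Real.sqrt π : ℂ), 1, 2 / (Real.sqrt π : ℂ),
           p⁻¹ ^ 3 * mittagLeffler (1 / 2) (1 / 2) p - 1 / (p ^ 3 * (Real.sqrt π : ℂ))
             - 1 / p ^ 2 - 2 / (p * (Real.sqrt π : ℂ));
         0, 1 / (Real.sqrt π : ℂ), 1,
           p⁻¹ ^ 2 * mittagLeffler (1 / 2) (1 / 2) p - 1 / (p ^ 2 * (Real.sqrt π : ℂ)) - 1 / p;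
         0, 0, 1 / (Real.sqrt π : ℂ),
           p⁻¹ * mittagLeffler (1 / 2) (1 / 2) p - 1 / (p * (Real.sqrt π : ℂ));
         0, 0, 0, mittagLeffler (1 / 2) (1 / 2) p] := by
  set B : Matrix (Fin 4) (Fin 4) ℂ :=
    !![0, 1, 0, 0; 0, 0, 1, 0; 0, 0, 0, 1; 0, 0, 0, p] with hB
  set c : ℕ → ℂ := fun k => (Complex.Gamma (((1 / 2 : ℝ) : ℂ) * k + 1 / 2))⁻¹ with hc
  -- powers of B
  have hB2 : B ^ 2 = !![0, 0, 1, 0; 0, 0, 0, 1; 0, 0, 0, p; 0, 0, 0, p ^ 2] := by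
    rw [pow_two, hB]
    ext i j
    fin_cases i <;> fin_cases j <;>
      simp [Matrix.mul_apply, Fin.sum_univ_four, Matrix.vecHead, Matrix.vecTail, pow_two]
  have hB3 : B ^ 3 = !![0, 0, 0, 1; 0, 0, 0, p; 0, 0, 0, p ^ 2; 0, 0, 0, p ^ 3] := by
    rw [pow_succ, hB2, hB]
    ext i j
    fin_cases i <;> fin_cases j <;>
      simp [Matrix.mul_apply, Fin.sum_univ_four, Matrix.vecHead, Matrix.vecTail, pow_succ]
  have hstep : B ^ 3 * B = p • B ^ 3 := by
    rw [hB3, hB]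
    ext i j
    fin_cases i <;> fin_cases j <;>
      simp [Matrix.mul_apply, Fin.sum_univ_four, Matrix.vecHead, Matrix.vecTail,
        pow_succ] <;> ring
  have hpow : ∀ k : ℕ, B ^ (k + 3) = p ^ k • B ^ 3 := by
    intro k
    induction k with
    | zero => simp
    | succ n ih =>
      rw [show n + 1 + 3 = (n + 3) + 1 by ring, pow_succ, ih, Matrix.smul_mul, hstep,
        smul_smul, ← pow_succ]
  -- summability
  have hπ : ((Real.sqrt π : ℝ) : ℂ) ≠ 0 :=
    Complex.ofReal_ne_zero.mpr (Real.sqrt_ne_zero'.mpr Real.pi_pos)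
  have hs : Summable (fun k : ℕ => p ^ k * c k) := summableML p
  have hs3 : Summable (fun k : ℕ => c (k + 3) * p ^ k) := by
    have h1 : Summable (fun k : ℕ => p ^ (k + 3) * c (k + 3)) :=
      (summable_nat_add_iff 3).mpr hs
    have h2 := h1.mul_left (p⁻¹ ^ 3)
    refine h2.congr fun k => ?_
    field_simp
    ring
  have hmat : Summable (fun k : ℕ => c k • B ^ k) := by
    rw [← summable_nat_add_iff 3]
    have : (fun k : ℕ => c (k + 3) • B ^ (k + 3))
        = fun k : ℕ => (c (k + 3) * p ^ k) • B ^ 3 := by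
      funext k
      rw [hpow k, smul_smul]
    rw [this]
    exact hs3.smul_const _
  -- compute the matrix tsum
  have key : mittagLefflerMatrix (1 / 2) (1 / 2) B
      = c 0 • (1 : Matrix (Fin 4) (Fin 4) ℂ) + c 1 • B + c 2 • B ^ 2
        + (∑' k : ℕ, c (k + 3) * p ^ k) • B ^ 3 := by
    have h1 := Summable.sum_add_tsum_nat_add 3 hmat
    have h2 : (∑' k : ℕ, c (k + 3) • B ^ (k + 3))
        = (∑' k : ℕ, c (k + 3) * p ^ k) • B ^ 3 := by
      rw [← Summable.tsum_smul_const hs3]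
      congr 1
      funext k
      rw [hpow k, smul_smul]
    rw [mittagLefflerMatrix]
    rw [← h1, h2, Finset.sum_range_succ, Finset.sum_range_succ, Finset.sum_range_one]
    simp [pow_zero, pow_one]
  -- scalar relation
  have hEp : mittagLeffler (1 / 2) (1 / 2) p
      = p ^ 0 * c 0 + p ^ 1 * c 1 + p ^ 2 * c 2 + p ^ 3 * (∑' k : ℕ, c (k + 3) * p ^ k) := by
    have h1 := Summable.sum_add_tsum_nat_add 3 hs
    have h2 : (∑' k : ℕ, p ^ (k + 3) * c (k + 3)) = p ^ 3 * (∑' k : ℕ, c (k + 3) * p ^ k) := by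
      rw [← tsum_mul_left]
      congr 1
      funext k
      ring
    rw [mittagLeffler, ← h1, h2, Finset.sum_range_succ, Finset.sum_range_succ,
      Finset.sum_range_one]
  -- Gamma values
  have hc0 : c 0 = ((Real.sqrt π : ℝ) : ℂ)⁻¹ := by
    have : ((1 / 2 : ℝ) : ℂ) * (0 : ℕ) + 1 / 2 = (((1 / 2 : ℝ) : ℝ) : ℂ) := by push_cast; ring
    rw [hc]
    simp only [this, Complex.Gamma_ofReal, Real.Gamma_one_half_eq]
  have hc1 : c 1 = 1 := by
    have : ((1 / 2 : ℝ) : ℂ) * (1 : ℕ) + 1 / 2 = 1 := by push_cast; ring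
    rw [hc]
    simp only [this, Complex.Gamma_one, inv_one]
  have hc2 : c 2 = 2 * ((Real.sqrt π : ℝ) : ℂ)⁻¹ := by
    have harg : ((1 / 2 : ℝ) : ℂ) * (2 : ℕ) + 1 / 2 = (((3 / 2 : ℝ) : ℝ) : ℂ) := by
      push_cast; ring
    have h32 : Real.Gamma (3 / 2) = Real.sqrt π / 2 := by
      rw [show (3 / 2 : ℝ) = 1 / 2 + 1 by norm_num, Real.Gamma_add_one (by norm_num),
        Real.Gamma_one_half_eq]
      ring
    rw [hc]
    simp only [harg, Complex.Gamma_ofReal, h32]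
    push_cast
    rw [← Complex.ofReal_inv]
    field_simp
    rw [← Complex.ofReal_mul, mul_one_div_cancel (Real.sqrt_ne_zero'.mpr Real.pi_pos),
      Complex.ofReal_one]
  -- assemble
  set S : ℂ := ∑' k : ℕ, c (k + 3) * p ^ k with hSdef
  set E : ℂ := mittagLeffler (1 / 2) (1 / 2) p with hEdef
  have hSval : E = ((Real.sqrt π : ℝ) : ℂ)⁻¹ + p + p ^ 2 * (2 * ((Real.sqrt π : ℝ) : ℂ)⁻¹)
      + p ^ 3 * S := by
    rw [hEp, hc0, hc1, hc2]
    ring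
  have key3 : ((Real.sqrt π : ℝ) : ℂ) * E
      = 1 + ((Real.sqrt π : ℝ) : ℂ) * p + 2 * p ^ 2 + ((Real.sqrt π : ℝ) : ℂ) * p ^ 3 * S := by
    rw [hSval]
    field_simp
  have h1 : p * p⁻¹ = 1 := mul_inv_cancel₀ hp
  rw [key, hB, hB2, hB3, hc0, hc1, hc2]
  ext i j
  fin_cases i <;> fin_cases j <;>
    simp [Matrix.one_apply, Matrix.vecHead, Matrix.vecTail, one_div, div_eq_mul_inv]
  · rw [hSval]
    linear_combination (-(S * (p ^ 2 * p⁻¹ ^ 2 + p * p⁻¹ + 1)) - p⁻¹ ^ 2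
      - 2 * ((Real.sqrt π : ℝ) : ℂ)⁻¹ * p⁻¹ * (p * p⁻¹ + 1)) * h1
  · rw [hSval]
    linear_combination (-(S * p * (p * p⁻¹ + 1))
      - 2 * ((Real.sqrt π : ℝ) : ℂ)⁻¹ * (p * p⁻¹ + 1) - p⁻¹) * h1
  · rw [hSval]
    linear_combination (-(1 + 2 * ((Real.sqrt π : ℝ) : ℂ)⁻¹ * p + S * p ^ 2)) * h1
  · rw [hSval]
    ring
end

section
/- Let J be an m×m Jordan block with eigenvalue λ (λ on the diagonal, 1 on the superdiagonal). Then E_{α,β}(J) is upper triangular with (i,j)-entry equal to E^{j−i+1}_{α, β+(j−i)α}(λ) for j ≥ i and 0 for j < i. -/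
set_option maxHeartbeats 1000000

open Complex


/-- The `m × m` Jordan block with eigenvalue `λ`. -/
def jordanBlock (m : ℕ) (lam : ℂ) : Matrix (Fin m) (Fin m) ℂ :=
  Matrix.of fun i j => if (j : ℕ) = (i : ℕ) then lam
    else if (j : ℕ) = (i : ℕ) + 1 then 1 else 0


lemma gamma_rec (w : ℂ) (hw : 1 ≤ w.re) (N : ℕ) :
    Complex.Gamma (w + N) = (∏ j ∈ Finset.range N, (w + j)) * Complex.Gamma w := by
  induction N with
  | zero => simp
  | succ N ih =>
    have hne : w + N ≠ 0 := by
      intro h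
      have : (w + N).re = 0 := by rw [h]; simp
      simp only [Complex.add_re, Complex.natCast_re] at this
      have : (0:ℝ) ≤ (N:ℝ) := Nat.cast_nonneg N
      linarith
    have e : w + (N+1 : ℕ) = (w + N) + 1 := by push_cast; ring
    rw [e, Complex.Gamma_add_one _ hne, ih, Finset.prod_range_succ]
    ring

lemma gamma_inv_bound (y : ℝ) : ∃ M : ℝ, 0 ≤ M ∧ ∀ z : ℂ, z.im = y → 1 ≤ z.re →
    ‖(Complex.Gamma z)⁻¹‖ ≤ M / (Nat.floor z.re - 1).factorial := by
  set K : Set ℂ := (fun x : ℝ => (x : ℂ) + y * Complex.I) '' Set.Icc 1 2 with hK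
  have hKc : IsCompact K := (isCompact_Icc).image (by continuity)
  obtain ⟨M, hM⟩ := hKc.exists_bound_of_continuousOn
    (Complex.differentiable_one_div_Gamma.continuous.continuousOn)
  refine ⟨max M 0, le_max_right _ _, ?_⟩
  intro z him hre
  set N : ℕ := Nat.floor z.re - 1 with hN
  have hfl : 1 ≤ Nat.floor z.re := (Nat.one_le_floor_iff _).mpr hre
  have hcast : (N:ℝ) = (Nat.floor z.re : ℝ) - 1 := by
    rw [hN, Nat.cast_sub hfl, Nat.cast_one]
  have hfl1 : (Nat.floor z.re : ℝ) ≤ z.re := Nat.floor_le (by linarith)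
  have hfl2 : z.re < (Nat.floor z.re : ℝ) + 1 := Nat.lt_floor_add_one _
  set w : ℂ := z - N with hw
  have hwre : w.re = z.re - N := by simp [hw]
  have hwim : w.im = y := by simp [hw, him]
  have hwre1 : 1 ≤ w.re := by rw [hwre, hcast]; linarith
  have hwre2 : w.re ≤ 2 := by rw [hwre, hcast]; linarith
  have hwK : w ∈ K := by
    refine ⟨w.re, ⟨hwre1, hwre2⟩, ?_⟩
    apply Complex.ext <;> simp [hwim]
  have hz : z = w + N := by rw [hw]; ring
  have hMw : ‖(Complex.Gamma w)⁻¹‖ ≤ max M 0 := le_trans (hM w hwK) (le_max_left _ _)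
  have hprod : (N.factorial : ℝ) ≤ ∏ j ∈ Finset.range N, ‖w + (j:ℂ)‖ := by
    rw [← Finset.prod_range_add_one_eq_factorial]
    push_cast
    apply Finset.prod_le_prod
    · intro j _; positivity
    · intro j _
      calc ((j:ℝ) + 1) = 1 + (j:ℝ) := by ring
      _ ≤ w.re + (j:ℝ) := by linarith
      _ = (w + (j:ℂ)).re := by simp
      _ ≤ ‖w + (j:ℂ)‖ := Complex.re_le_norm _
  have hfac : (0:ℝ) < N.factorial := by positivity
  rw [hz, gamma_rec w hwre1 N, mul_inv, norm_mul, norm_inv, norm_prod]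
  calc (∏ j ∈ Finset.range N, ‖w + (j:ℂ)‖)⁻¹ * ‖(Complex.Gamma w)⁻¹‖
      ≤ (N.factorial : ℝ)⁻¹ * max M 0 := by
        apply mul_le_mul _ hMw (norm_nonneg _) (by positivity)
        exact inv_anti₀ hfac hprod
    _ = max M 0 / N.factorial := by rw [div_eq_mul_inv]; ring

lemma entry_summable (α : ℝ) (hα : 0 < α) (β : ℂ) (lam : ℂ) (d : ℕ) :
    Summable fun k : ℕ => (Complex.Gamma ((α:ℂ)*k + β))⁻¹ * ((k.choose d : ℂ) * lam ^ (k - d)) := by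
  set f : ℕ → ℂ := fun k => (Complex.Gamma ((α:ℂ)*k + β))⁻¹ * ((k.choose d : ℂ) * lam ^ (k - d)) with hf
  set L : ℝ := max ‖lam‖ 1 with hL
  have hL1 : 1 ≤ L := le_max_right _ _
  have hL0 : 0 < L := lt_of_lt_of_le one_pos hL1
  have h2L1 : 1 ≤ 2*L := by linarith
  have h2L0 : (0:ℝ) < 2*L := by linarith
  set q : ℝ := (2*L) ^ (-(1/α)) with hq
  have hq0 : 0 < q := Real.rpow_pos_of_pos h2L0 _
  have hq1 : q ≤ 1 := Real.rpow_le_one_of_one_le_of_nonpos h2L1 (by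
    rw [neg_nonpos]; positivity)
  have hqα : q ^ α = (2*L)⁻¹ := by
    rw [hq, ← Real.rpow_mul h2L0.le]
    have : -(1/α) * α = -1 := by field_simp
    rw [this, Real.rpow_neg_one]
  obtain ⟨M, hM0, hM⟩ := gamma_inv_bound β.im
  obtain ⟨n0, hn0⟩ := exists_nat_ge ((1 - β.re)/α)
  set k0 : ℕ := max n0 d with hk0
  set C : ℝ := M * Real.exp (1/q) * q ^ (β.re - 2) with hC
  have hC0 : 0 ≤ C := by positivity
  -- the key pointwise bound for k ≥ k0
  have hbound : ∀ k : ℕ, k0 ≤ k → ‖f k‖ ≤ C * k ^ d * (1/2) ^ k := by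
    intro k hk
    have hkd : d ≤ k := le_trans (le_max_right _ _) hk
    have hkn0 : (n0:ℝ) ≤ (k:ℝ) := by exact_mod_cast le_trans (le_max_left _ _) hk
    have hαk : 1 ≤ α * k + β.re := by
      have h1 : (1 - β.re)/α ≤ (k:ℝ) := le_trans hn0 hkn0
      have := (div_le_iff₀ hα).mp h1
      linarith
    set z : ℂ := (α:ℂ)*k + β with hz
    have hzre : z.re = α * k + β.re := by simp [hz]
    have hzim : z.im = β.im := by simp [hz]
    have hg : ‖(Complex.Gamma z)⁻¹‖ ≤ M / (Nat.floor z.re - 1).factorial :=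
      hM z hzim (by rw [hzre]; exact hαk)
    set N : ℕ := Nat.floor z.re - 1 with hN
    have hfl : 1 ≤ Nat.floor z.re := (Nat.one_le_floor_iff _).mpr (by rw [hzre]; exact hαk)
    have hNge : z.re - 2 ≤ (N:ℝ) := by
      have h1 : z.re - 1 < (Nat.floor z.re : ℝ) := by
        have := Nat.lt_floor_add_one z.re
        linarith
      have h2 : (N:ℝ) = (Nat.floor z.re : ℝ) - 1 := by
        rw [hN, Nat.cast_sub hfl, Nat.cast_one]
      linarith
    -- 1/N! ≤ exp(1/q) * q^N
    have hfacN : ((N.factorial:ℝ))⁻¹ ≤ Real.exp (1/q) * q ^ N := by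
      have h1 : (1/q) ^ N / N.factorial ≤ Real.exp (1/q) := by
        calc (1/q) ^ N / N.factorial
            ≤ ∑ i ∈ Finset.range (N+1), (1/q)^i / i.factorial :=
              Finset.single_le_sum (f := fun i => (1/q)^i / (i.factorial:ℝ))
                (fun i _ => by positivity) (Finset.self_mem_range_succ N)
          _ ≤ Real.exp (1/q) := Real.sum_le_exp_of_nonneg (by positivity) _
      have key : ((N.factorial:ℝ))⁻¹ = ((1/q)^N / N.factorial) * q^N := by
        rw [one_div, inv_pow]
        field_simp
      rw [key]
      exact mul_le_mul_of_nonneg_right h1 (by positivity)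
    have hqN : q ^ N ≤ (q ^ α) ^ k * q ^ (β.re - 2) := by
      have h1 : (q:ℝ) ^ (N:ℕ) = q ^ ((N:ℕ):ℝ) := (Real.rpow_natCast q N).symm
      rw [h1]
      have h2 : q ^ ((N:ℕ):ℝ) ≤ q ^ (z.re - 2) :=
        Real.rpow_le_rpow_of_exponent_ge hq0 hq1 hNge
      have h3 : q ^ (z.re - 2) = (q ^ α) ^ k * q ^ (β.re - 2) := by
        rw [hzre, show α * k + β.re - 2 = α * (k:ℝ) + (β.re - 2) by ring,
          Real.rpow_add hq0, ← Real.rpow_natCast (q ^ α) k, ← Real.rpow_mul hq0.le]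
      rw [← h3]; exact h2
    have hch : ((k.choose d : ℕ):ℝ) ≤ (k:ℝ) ^ d := by
      exact_mod_cast Nat.choose_le_pow k d
    have hlam : ‖lam ^ (k - d)‖ ≤ L ^ k := by
      rw [norm_pow]
      calc ‖lam‖ ^ (k-d) ≤ L ^ (k-d) := pow_le_pow_left₀ (norm_nonneg _) (le_max_left _ _) _
        _ ≤ L ^ k := pow_le_pow_right₀ hL1 (Nat.sub_le _ _)
    have hnorm : ‖f k‖ = ‖(Complex.Gamma z)⁻¹‖ * ((k.choose d : ℕ):ℝ) * ‖lam ^ (k-d)‖ := by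
      simp only [hf, norm_mul, Complex.norm_natCast]
      ring
    calc ‖f k‖ = ‖(Complex.Gamma z)⁻¹‖ * ((k.choose d : ℕ):ℝ) * ‖lam ^ (k-d)‖ := hnorm
      _ ≤ (M / N.factorial) * (k:ℝ)^d * L^k := by
          apply mul_le_mul (mul_le_mul hg hch (by positivity) (by positivity)) hlam
            (norm_nonneg _) (by positivity)
      _ = M * (N.factorial:ℝ)⁻¹ * (k:ℝ)^d * L^k := by rw [div_eq_mul_inv]
      _ ≤ M * (Real.exp (1/q) * q ^ N) * (k:ℝ)^d * L^k := by
          apply mul_le_mul_of_nonneg_right _ (by positivity)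
          apply mul_le_mul_of_nonneg_right _ (by positivity)
          exact mul_le_mul_of_nonneg_left hfacN hM0
      _ ≤ M * (Real.exp (1/q) * ((q ^ α) ^ k * q ^ (β.re - 2))) * (k:ℝ)^d * L^k := by
          apply mul_le_mul_of_nonneg_right _ (by positivity)
          apply mul_le_mul_of_nonneg_right _ (by positivity)
          apply mul_le_mul_of_nonneg_left _ hM0
          exact mul_le_mul_of_nonneg_left hqN (Real.exp_pos _).le
      _ = C * (k:ℝ)^d * ((q^α) * L)^k := by
          rw [hC, mul_pow]
          ring
      _ = C * (k:ℝ)^d * (1/2)^k := by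
          rw [hqα]
          congr 2
          rw [inv_mul_eq_div]
          field_simp
  -- conclude summability
  have hg : Summable fun k : ℕ => C * (k:ℝ)^d * (1/2)^k := by
    have := summable_pow_mul_geometric_of_norm_lt_one (R := ℝ) d
      (r := (1/2:ℝ)) (by rw [Real.norm_eq_abs, _root_.abs_of_nonneg (by norm_num : (0:ℝ) ≤ 1/2)]; norm_num)
    have := this.mul_left C
    simpa [mul_assoc] using this
  have h2 : Summable fun n : ℕ => C * ((n + k0 : ℕ):ℝ)^d * (1/2)^(n + k0 : ℕ) :=
    (summable_nat_add_iff k0).mpr hg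
  have hsh : Summable fun n : ℕ => f (n + k0) :=
    Summable.of_norm_bounded h2 (fun n => hbound (n + k0) (Nat.le_add_left _ _))
  exact (summable_nat_add_iff k0).mp hsh

lemma key (lam : ℂ) (k d : ℕ) (hd : 1 ≤ d) :
    (k.choose d : ℂ) * lam ^ (k - d) * lam + (k.choose (d-1) : ℂ) * lam ^ (k - (d-1))
      = ((k+1).choose d : ℂ) * lam ^ (k+1-d) := by
  obtain ⟨e, rfl⟩ : ∃ e, d = e + 1 := ⟨d - 1, by omega⟩
  simp only [Nat.add_sub_cancel]
  rw [Nat.choose_succ_succ, Nat.succ_sub_succ]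
  rcases lt_or_ge k (e+1) with h | h
  · rw [Nat.choose_eq_zero_of_lt h]
    push_cast
    ring
  · have he : k - e = k - (e+1) + 1 := by omega
    rw [he, pow_succ]
    push_cast
    ring

lemma jordan_pow (m : ℕ) (lam : ℂ) (k : ℕ) (i j : Fin m) :
    (jordanBlock m lam ^ k) i j
      = if (i : ℕ) ≤ (j : ℕ) then
          (k.choose ((j : ℕ) - (i : ℕ)) : ℂ) * lam ^ (k - ((j : ℕ) - (i : ℕ)))
        else 0 := by
  induction k generalizing j with
  | zero =>
    rw [pow_zero, Matrix.one_apply]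
    rcases eq_or_ne i j with rfl | hij
    · simp
    · have : (i : ℕ) ≠ (j : ℕ) := fun h => hij (Fin.ext h)
      rcases le_or_gt (i : ℕ) (j : ℕ) with h | h
      · have hd : 0 < (j : ℕ) - (i : ℕ) := by omega
        simp [hij, h, Nat.choose_eq_zero_of_lt, hd, Nat.choose_eq_zero_iff]
      · simp [hij, h.not_ge]
  | succ k ih =>
    rw [pow_succ, Matrix.mul_apply]
    have hsplit : ∀ x : Fin m, (jordanBlock m lam) x j
        = lam * (if j = x then 1 else 0) + (if (j : ℕ) = (x : ℕ) + 1 then 1 else 0) := by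
      intro x
      simp only [jordanBlock, Matrix.of_apply]
      rcases eq_or_ne ((j:ℕ)) ((x:ℕ)) with h | h
      · have : j = x := Fin.ext h
        simp [h, this]
      · have : j ≠ x := fun hh => h (by rw [hh])
        simp [h, this]
    simp only [hsplit, mul_add, mul_ite, mul_one, mul_zero]
    rw [Finset.sum_add_distrib, Finset.sum_ite_eq Finset.univ j (fun x => (jordanBlock m lam ^ k) i x * lam)]
    simp only [Finset.mem_univ, if_true]
    rcases Nat.eq_zero_or_pos (j : ℕ) with hj0 | hj0
    · -- j = 0 : second sum vanishes
      have h2 : (∑ x : Fin m, if (j : ℕ) = (x : ℕ) + 1 then (jordanBlock m lam ^ k) i x else 0) = 0 := by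
        apply Finset.sum_eq_zero
        intro x _
        rw [if_neg]; omega
      rw [h2, ih, add_zero]
      have hij : (j : ℕ) ≤ (i : ℕ) := by omega
      rcases Nat.eq_zero_or_pos (i : ℕ) with hi0 | hi0
      · have : (i:ℕ) = (j:ℕ) := by omega
        simp [this, hj0, ← pow_succ]
      · have h1 : ¬ (i:ℕ) ≤ (j:ℕ) := by omega
        simp [h1]
    · -- j = t+1
      have hjm : (j : ℕ) - 1 < m := by omega
      set x0 : Fin m := ⟨(j : ℕ) - 1, hjm⟩ with hx0
      have hx0v : (x0 : ℕ) = (j : ℕ) - 1 := rfl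
      have h2 : (∑ x : Fin m, if (j : ℕ) = (x : ℕ) + 1 then (jordanBlock m lam ^ k) i x else 0)
          = (jordanBlock m lam ^ k) i x0 := by
        rw [Finset.sum_eq_single x0]
        · rw [if_pos (by omega)]
        · intro b _ hb
          rw [if_neg]
          intro hc
          exact hb (Fin.ext (by omega))
        · intro h; exact absurd (Finset.mem_univ x0) h
      rw [h2, ih, ih, hx0v]
      rcases le_or_gt (i:ℕ) ((j:ℕ) - 1) with hle | hlt
      · have hij : (i:ℕ) ≤ (j:ℕ) := by omega
        rw [if_pos hle, if_pos hij, if_pos hij]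
        have hd1 : 1 ≤ (j:ℕ) - (i:ℕ) := by omega
        have he : (j:ℕ) - 1 - (i:ℕ) = ((j:ℕ) - (i:ℕ)) - 1 := by omega
        rw [he]
        exact key lam k _ hd1
      · rw [if_neg (not_le.mpr hlt), add_zero]
        rcases le_or_gt (i:ℕ) ((j:ℕ)) with h3 | h3
        · have hij : (i:ℕ) = (j:ℕ) := by omega
          have hz : (j:ℕ) - (i:ℕ) = 0 := by omega
          rw [if_pos h3, if_pos h3, hz]
          simp [← pow_succ]
        · rw [if_neg (not_le.mpr h3), if_neg (not_le.mpr h3), zero_mul]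
theorem mittagLefflerMatrix_jordanBlock (α : ℝ) (hα : 0 < α) (β : ℂ)
    (m : ℕ) (lam : ℂ) (i j : Fin m) :
    mittagLefflerMatrix α β (jordanBlock m lam) i j
      = if i ≤ j then
          prabhakar (((j : ℕ) - (i : ℕ) : ℕ) + 1) α
            (β + (α : ℂ) * (((j : ℕ) - (i : ℕ) : ℕ) : ℂ)) lam
        else 0 := by
  set F : ℕ → Matrix (Fin m) (Fin m) ℂ :=
    fun k => (Complex.Gamma ((α : ℂ) * k + β))⁻¹ • jordanBlock m lam ^ k with hF
  have hentry : ∀ (k : ℕ) (a b : Fin m), F k a b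
      = if (a : ℕ) ≤ (b : ℕ) then
          (Complex.Gamma ((α:ℂ)*k + β))⁻¹
            * ((k.choose ((b:ℕ) - (a:ℕ)) : ℂ) * lam ^ (k - ((b:ℕ) - (a:ℕ))))
        else 0 := by
    intro k a b
    rw [hF]
    simp only [Matrix.smul_apply, smul_eq_mul, jordan_pow]
    split_ifs with h
    · rfl
    · exact mul_zero _
  have hsum : Summable F := by
    refine Pi.summable.mpr ?_
    intro a
    rw [Pi.summable]
    intro b
    have : (fun k => F k a b) = fun k : ℕ =>
        if (a : ℕ) ≤ (b : ℕ) then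
          (Complex.Gamma ((α:ℂ)*k + β))⁻¹
            * ((k.choose ((b:ℕ) - (a:ℕ)) : ℂ) * lam ^ (k - ((b:ℕ) - (a:ℕ))))
        else 0 := funext fun k => hentry k a b
    rw [this]
    split_ifs with h
    · exact entry_summable α hα β lam _
    · exact summable_zero
  have happ : mittagLefflerMatrix α β (jordanBlock m lam) i j = ∑' k, F k i j := by
    rw [mittagLefflerMatrix]
    exact (congrFun (tsum_apply (f := fun k => (F k : Fin m → Fin m → ℂ)) hsum) j).trans (tsum_apply (Pi.summable.mp hsum i))
  rw [happ]
  by_cases hij : i ≤ j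
  · rw [if_pos hij]
    have hijn : (i : ℕ) ≤ (j : ℕ) := hij
    set d : ℕ := (j : ℕ) - (i : ℕ) with hd
    have h1 : (fun k => F k i j) = fun k : ℕ =>
        (Complex.Gamma ((α:ℂ)*k + β))⁻¹ * ((k.choose d : ℂ) * lam ^ (k - d)) := by
      funext k
      rw [hentry k i j, if_pos hijn]
    rw [h1]
    set f : ℕ → ℂ :=
      fun k => (Complex.Gamma ((α:ℂ)*k + β))⁻¹ * ((k.choose d : ℂ) * lam ^ (k - d)) with hf
    have hinj : Function.Injective (fun n : ℕ => n + d) := add_left_injective d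
    have hzero : Function.support f ⊆ Set.range (fun n : ℕ => n + d) := by
      intro x hx
      rcases le_or_gt d x with h | h
      · exact ⟨x - d, show x - d + d = x by omega⟩
      · exfalso
        apply hx
        rw [hf]
        simp [Nat.choose_eq_zero_of_lt h]
    rw [← hinj.tsum_eq hzero]
    rw [prabhakar]
    apply tsum_congr
    intro n
    have hgam : (α:ℂ) * (n + d : ℕ) + β = (α:ℂ) * n + (β + (α:ℂ) * (d:ℂ)) := by
      push_cast; ring
    have hpoch : (ascPochhammer ℂ n).eval ((d:ℂ) + 1)
        = (n.factorial : ℂ) * ((n + d).choose d : ℂ) := by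
      have h2 : ((d + 1 : ℕ) : ℂ) = (d:ℂ) + 1 := by push_cast; ring
      rw [← h2, ← Nat.cast_ascFactorial]
      have h3 : (d + 1).ascFactorial n = n.factorial * (d + n).choose n :=
        Nat.ascFactorial_eq_factorial_mul_choose d n
      have h4 : (d + n).choose n = (n + d).choose d := by
        rw [Nat.add_comm d n]
        have h5 := Nat.choose_symm (Nat.le_add_right n d)
        rw [Nat.add_sub_cancel_left] at h5
        exact h5.symm
      rw [h3, h4]
      push_cast
      ring
    show (Complex.Gamma ((α:ℂ)*(n+d : ℕ) + β))⁻¹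
        * (((n+d).choose d : ℂ) * lam ^ (n + d - d)) = _
    rw [Nat.add_sub_cancel, hgam, hpoch]
    have hfac : (n.factorial : ℂ) ≠ 0 := Nat.cast_ne_zero.mpr n.factorial_ne_zero
    have halg : ∀ (a b c g : ℂ), a ≠ 0 → g * (b * c) = a * b * c * (g / a) := by
      intro a b c g ha
      field_simp
    exact halg _ _ _ _ hfac
  · rw [if_neg hij]
    have hijn : ¬ ((i : ℕ) ≤ (j : ℕ)) := hij
    have h1 : (fun k => F k i j) = fun _ => (0:ℂ) := by
      funext k
      rw [hentry k i j, if_neg hijn]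
    rw [h1, tsum_zero]
end
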